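/- For every i ≥ 1, all a₁, …, a_i ∈ A, and every permutation σ of {1, …, i}: [⋯[D a₁, a₂], …, a_i] = [⋯[D a_{σ(1)}, a_{σ(2)}], …, a_{σ(i)}]. In other words, the multilinear map (a₁,…,a_i) ↦ [⋯[D a₁, a₂], …, a_i] is symmetric in its arguments when these lie in the abelian subalgebra A. (Ungraded instance of the symmetry lemma of Voronov used in the proof of Proposition 5.3 of the paper.) -/

import Mathlib

/-!
Symmetry lemma of Voronov (used in the proof of Proposition 5.3 of Bandiera,
"Nonabelian higher derived brackets"), ungraded instance: if `A ⊆ M` is an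
abelian Lie subalgebra and `D` is a `K`-linear derivation of `M`, then the
multilinear map `(a₁,…,a_i) ↦ [⋯[D a₁, a₂], …, a_i]` is symmetric in its
arguments when these lie in `A`.
-/

/-- Iterated Lie bracket `[⋯[x, y₁], …, y_r]`, bracketing from the left. -/
def nestBr {M : Type*} [LieRing M] (x : M) (l : List M) : M :=
  l.foldl (fun y z => ⁅y, z⁆) x

/-- `[⋯[D a₁, a₂], …, a_r]`: the iterated bracket with `D` applied to the head. -/
def dnestBr {M : Type*} [LieRing M] (D : M → M) : List M → M
  | [] => 0
  | x :: xs => nestBr (D x) xs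

/-- The list `(a_{σ(1)}, …, a_{σ(i)})` obtained by permuting the entries of `l`. -/
def permList {M : Type*} (l : List M) (σ : Equiv.Perm (Fin l.length)) : List M :=
  List.ofFn (fun j => l.get (σ j))

lemma nestBr_perm {K M : Type*} [Field K] [LieRing M] [LieAlgebra K M]
    (A : LieSubalgebra K M) (hab : ∀ x ∈ A, ∀ y ∈ A, ⁅x, y⁆ = (0 : M))
    {l₁ l₂ : List M} (h : l₁.Perm l₂) :
    (∀ x ∈ l₁, x ∈ A) → ∀ y : M, nestBr y l₁ = nestBr y l₂ := by
  induction h with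
  | nil => intro _ y; rfl
  | cons x h ih =>
      intro hm y
      have := ih (fun z hz => hm z (List.mem_cons_of_mem _ hz)) ⁅y, x⁆
      simpa [nestBr] using this
  | swap a b l =>
      intro hm y
      have hab0 : ⁅b, a⁆ = (0:M) :=
        hab b (hm b (by simp)) a (hm a (by simp))
      have key : ⁅⁅y, b⁆, a⁆ = ⁅⁅y, a⁆, b⁆ := by
        have := leibniz_lie y b a
        have h2 : ⁅y, ⁅b, a⁆⁆ = (0:M) := by rw [hab0]; simp
        rw [h2] at this
        have h3 : ⁅⁅y, b⁆, a⁆ = -⁅b, ⁅y, a⁆⁆ := eq_neg_of_add_eq_zero_left this.symm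
        rw [h3, lie_skew]
      simp [nestBr, key]
  | trans h₁ h₂ ih₁ ih₂ =>
      intro hm y
      rw [ih₁ hm y, ih₂ (fun z hz => hm z (h₁.mem_iff.mpr hz)) y]

lemma dnestBr_perm {K M : Type*} [Field K] [LieRing M] [LieAlgebra K M]
    (A : LieSubalgebra K M) (hab : ∀ x ∈ A, ∀ y ∈ A, ⁅x, y⁆ = (0 : M))
    (D : M → M) (hD0 : D 0 = 0)
    (hDder : ∀ x y : M, D ⁅x, y⁆ = ⁅D x, y⁆ + ⁅x, D y⁆)
    {l₁ l₂ : List M} (h : l₁.Perm l₂) :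
    (∀ x ∈ l₁, x ∈ A) → dnestBr D l₁ = dnestBr D l₂ := by
  induction h with
  | nil => intro _; rfl
  | cons x h ih =>
      intro hm
      exact nestBr_perm A hab h (fun z hz => hm z (List.mem_cons_of_mem _ hz)) (D x)
  | swap a b l =>
      intro hm
      have hbA : b ∈ A := hm b (by simp)
      have haA : a ∈ A := hm a (by simp)
      have hab0 : ⁅b, a⁆ = (0:M) := hab b hbA a haA
      have key : ⁅D b, a⁆ = ⁅D a, b⁆ := by
        have h1 := hDder b a
        rw [hab0, hD0] at h1
        have h2 : ⁅D b, a⁆ = -⁅b, D a⁆ := eq_neg_of_add_eq_zero_left h1.symm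
        rw [h2, lie_skew]
      simp only [dnestBr, nestBr, List.foldl_cons, key]
  | trans h₁ h₂ ih₁ ih₂ =>
      intro hm
      rw [ih₁ hm, ih₂ (fun z hz => hm z (h₁.mem_iff.mpr hz))]

/-- For every `i ≥ 1`, all `a₁, …, a_i` in an abelian Lie
subalgebra `A` of `M`, and every permutation `σ` of `{1,…,i}`:
`[⋯[D a₁, a₂], …, a_i] = [⋯[D a_{σ(1)}, a_{σ(2)}], …, a_{σ(i)}]`. -/
theorem statement5 {K M : Type*} [Field K] [CharZero K] [LieRing M]
    [LieAlgebra K M] (A : LieSubalgebra K M)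
    (hab : ∀ x ∈ A, ∀ y ∈ A, ⁅x, y⁆ = (0 : M))
    (D : M → M) (hDlin : IsLinearMap K D)
    (hDder : ∀ x y : M, D ⁅x, y⁆ = ⁅D x, y⁆ + ⁅x, D y⁆)
    (l : List M) (hne : l ≠ []) (hl : ∀ x ∈ l, x ∈ A)
    (σ : Equiv.Perm (Fin l.length)) :
    dnestBr D l = dnestBr D (permList l σ) := by
  have hperm : l.Perm (permList l σ) := by
    have := (σ.ofFn_comp_perm l.get).symm
    simpa [permList, Function.comp_def, List.ofFn_get] using this
  exact dnestBr_perm A hab D (hDlin.mk' D).map_zero hDder hperm hl
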